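/- Let p > 1, K > 0, T̄ > 0 and S ∈ (T̄, ∞]. Suppose H is twice continuously differentiable on [T̄, S) with H(T̄) > 0, H'(t) > 0 on [T̄, S), T̄ · H'(T̄) ≥ H(T̄), and H''(t) ≥ K · H(t)^{(p+1)/2} for all t ∈ [T̄, S). Then S ≤ 2T̄ + (4/(p−1)) · ((4K(1 − 2^{−(p+3)/2}))/(p+3))^{−1/2} · (2 H(T̄))^{−(p−1)/4}; in particular S is finite. -/

import Mathlib

open Set

set_option maxHeartbeats 1000000 in
/-- Blow-up for `H'' ≥ K H^{(p+1)/2}`: let `p > 1`, `K > 0`, `T̄ > 0`, `S ∈ (T̄, ∞]`, and let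
`H` be `C²` on `[T̄, S)` with `H(T̄) > 0`, `H' > 0` on `[T̄, S)`, `T̄ H'(T̄) ≥ H(T̄)` and
`H''(t) ≥ K H(t)^{(p+1)/2}` on `[T̄, S)` (one-sided derivatives on `[T̄, ∞)`). Then
`S ≤ 2T̄ + (4/(p-1)) ((4K(1 - 2^{-(p+3)/2}))/(p+3))^{-1/2} (2H(T̄))^{-(p-1)/4}`;
in particular `S` is finite. -/
theorem ode_blowup_lemma (p K Tb : ℝ) (S : EReal) (hp : 1 < p) (hK : 0 < K)
    (hTb : 0 < Tb) (hS : (Tb : EReal) < S) (H : ℝ → ℝ)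
    (hsm : ContDiffOn ℝ 2 H {t : ℝ | Tb ≤ t ∧ (t : EReal) < S})
    (hHT : 0 < H Tb)
    (hH' : ∀ t : ℝ, Tb ≤ t → (t : EReal) < S → 0 < derivWithin H (Set.Ici Tb) t)
    (hTH : H Tb ≤ Tb * derivWithin H (Set.Ici Tb) Tb)
    (hineq : ∀ t : ℝ, Tb ≤ t → (t : EReal) < S →
      K * H t ^ ((p + 1) / 2) ≤ derivWithin (derivWithin H (Set.Ici Tb)) (Set.Ici Tb) t) :
    S ≤ ((2 * Tb + 4 / (p - 1) *
      (4 * K * (1 - (2 : ℝ) ^ (-((p + 3) / 2))) / (p + 3)) ^ (-(1 / 2) : ℝ) *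
      (2 * H Tb) ^ (-((p - 1) / 4)) : ℝ) : EReal) := by
  by_contra hcon
  push_neg at hcon
  set B : ℝ := 2 * Tb + 4 / (p - 1) *
      (4 * K * (1 - (2 : ℝ) ^ (-((p + 3) / 2))) / (p + 3)) ^ (-(1 / 2) : ℝ) *
      (2 * H Tb) ^ (-((p - 1) / 4)) with hBdef
  have hp1 : (0:ℝ) < p - 1 := by linarith
  set q : ℝ := (p + 3) / 2 with hq
  have hq2 : (2:ℝ) ≤ q := by rw [hq]; linarith
  have hq0 : (0:ℝ) ≤ q := by linarith
  have h2q : (0:ℝ) < 1 - (2:ℝ) ^ (-q) := by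
    have : (2:ℝ) ^ (-q) < 1 :=
      Real.rpow_lt_one_of_one_lt_of_neg one_lt_two (by linarith)
    linarith
  set c' : ℝ := 4 * K / (p + 3) with hc'
  have hc'pos : 0 < c' := by positivity
  set c : ℝ := 4 * K * (1 - (2:ℝ) ^ (-q)) / (p + 3) with hc
  have hcpos : 0 < c := by positivity
  set C : ℝ := Real.sqrt c with hCdef
  have hCpos : 0 < C := Real.sqrt_pos.2 hcpos
  have hC2 : C ^ 2 = c := Real.sq_sqrt hcpos.le
  have hcc' : c = c' * (1 - (2:ℝ) ^ (-q)) := by rw [hc, hc']; ring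
  have hcC : c ^ (-(1/2) : ℝ) = C⁻¹ := by
    rw [Real.rpow_neg hcpos.le, hCdef, Real.sqrt_eq_rpow]
  set e : ℝ := -((p - 1) / 4) with he
  have he0 : e ≤ 0 := by rw [he]; linarith
  set Z : ℝ := (2 * H Tb) ^ e with hZ
  have hZpos : 0 < Z := Real.rpow_pos_of_pos (by linarith) _
  have hBeq : B = 2 * Tb + 4 / (p - 1) * C⁻¹ * Z := by
    rw [hBdef, hZ, he]
    congr 2
    rw [← hcC, hc, hq]
  have hBgt : 2 * Tb < B := by
    rw [hBeq]
    have : 0 < 4 / (p - 1) * C⁻¹ * Z :=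
      mul_pos (mul_pos (div_pos four_pos hp1) (inv_pos.2 hCpos)) hZpos
    linarith
  -- pick a real time T1 with B < T1 < S
  obtain ⟨T1, hBT1, hT1S⟩ : ∃ T1 : ℝ, B < T1 ∧ (T1 : EReal) < S := by
    by_cases htop : S = ⊤
    · exact ⟨B + 1, by linarith, by rw [htop]; exact EReal.coe_lt_top _⟩
    · have hbot : S ≠ ⊥ := fun h => by simp [h] at hS
      obtain ⟨r, hr⟩ : ∃ r : ℝ, S = (r : EReal) :=
        ⟨S.toReal, (EReal.coe_toReal htop hbot).symm⟩
      rw [hr] at hcon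
      have hBr : B < r := by exact_mod_cast hcon
      exact ⟨(B + r) / 2, left_lt_add_div_two.2 hBr,
        by rw [hr]; exact_mod_cast add_div_two_lt_right.2 hBr⟩
  have hTbT1 : Tb < T1 := by linarith
  have h2TbT1 : 2 * Tb < T1 := by linarith
  -- basic set-up
  set V : Set ℝ := {t : ℝ | (t : EReal) < S} with hV
  have hVopen : IsOpen V := isOpen_Iio.preimage continuous_coe_real_ereal
  set D : Set ℝ := {t : ℝ | Tb ≤ t ∧ (t : EReal) < S} with hD
  have hDeq : D = Ici Tb ∩ V := rfl
  have hsub : Icc Tb T1 ⊆ D := fun t ht =>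
    ⟨ht.1, lt_of_le_of_lt (EReal.coe_le_coe_iff.2 ht.2) hT1S⟩
  set U : Set ℝ := Ioi Tb ∩ V with hU
  have hUopen : IsOpen U := isOpen_Ioi.inter hVopen
  have hUsub : U ⊆ D := fun t ht => ⟨ht.1.le, ht.2⟩
  have hIooU : Ioo Tb T1 ⊆ U := fun t ht =>
    ⟨ht.1, lt_of_le_of_lt (EReal.coe_le_coe_iff.2 ht.2.le) hT1S⟩
  set f' : ℝ → ℝ := derivWithin H (Ici Tb) with hf'
  have fe : ∀ t ∈ U, f' t = deriv H t := fun t ht =>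
    derivWithin_of_mem_nhds (Ici_mem_nhds ht.1)
  have hC2U : ContDiffOn ℝ 2 H U := hsm.mono hUsub
  have hderivU : ContDiffOn ℝ 1 (deriv H) U :=
    hC2U.deriv_of_isOpen hUopen (by norm_num)
  have hH1 : ∀ t ∈ U, HasDerivAt H (deriv H t) t := fun t ht =>
    ((hC2U.differentiableOn (by norm_num)).differentiableAt
      (hUopen.mem_nhds ht)).hasDerivAt
  have hH2 : ∀ t ∈ U, HasDerivAt (deriv H) (deriv (deriv H) t) t := fun t ht =>
    ((hderivU.differentiableOn (by norm_num)).differentiableAt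
      (hUopen.mem_nhds ht)).hasDerivAt
  have hf''eq : ∀ t ∈ U,
      derivWithin f' (Ici Tb) t = deriv (deriv H) t := by
    intro t ht
    have hev : f' =ᶠ[nhds t] deriv H :=
      Filter.eventuallyEq_of_mem (hUopen.mem_nhds ht) fe
    rw [(hev.filter_mono nhdsWithin_le_nhds).derivWithin_eq hev.self_of_nhds]
    exact derivWithin_of_mem_nhds (Ici_mem_nhds ht.1)
  have hineq' : ∀ t ∈ U, K * H t ^ ((p + 1) / 2) ≤ deriv (deriv H) t := by
    intro t ht
    rw [← hf''eq t ht]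
    exact hineq t ht.1.le ht.2
  -- H is monotone and positive on [Tb, T1]
  have hHcont : ContinuousOn H (Icc Tb T1) := hsm.continuousOn.mono hsub
  have hderivpos : ∀ t ∈ Ioo Tb T1, 0 < deriv H t := by
    intro t ht
    have htU := hIooU ht
    rw [← fe t htU]
    exact hH' t ht.1.le htU.2
  have hHmono : MonotoneOn H (Icc Tb T1) := by
    apply monotoneOn_of_deriv_nonneg (convex_Icc _ _) hHcont
    · rw [interior_Icc]
      exact fun t ht => ((hH1 t (hIooU ht)).differentiableAt).differentiableWithinAt
    · rw [interior_Icc]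
      exact fun t ht => (hderivpos t ht).le
  have hTbmem : Tb ∈ Icc Tb T1 := ⟨le_rfl, hTbT1.le⟩
  have hHpos : ∀ t ∈ Icc Tb T1, 0 < H t := fun t ht =>
    lt_of_lt_of_le hHT (hHmono hTbmem ht ht.1)
  have hh2 : ∀ t ∈ Ioo Tb T1, 0 ≤ deriv (deriv H) t := by
    intro t ht
    refine le_trans ?_ (hineq' t (hIooU ht))
    have := hHpos t (Ioo_subset_Icc_self ht)
    positivity
  -- continuity of f' on [Tb, T1]
  have hDu : UniqueDiffOn ℝ D := by
    intro x hx
    exact (uniqueDiffOn_Ici Tb x hx.1).inter (hVopen.mem_nhds hx.2)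
  have hf'cont : ContinuousOn f' (Icc Tb T1) := by
    have h1 : ContinuousOn (derivWithin H D) D :=
      hsm.continuousOn_derivWithin hDu (by norm_num)
    have h2 : ContinuousOn f' D := by
      refine h1.congr fun x hx => ?_
      rw [hf', hDeq]
      exact (derivWithin_inter (hVopen.mem_nhds hx.2)).symm
    exact h2.mono hsub
  -- Step 3: t * H'(t) - H(t) is monotone, hence nonnegative
  have hφderiv : ∀ t ∈ Ioo Tb T1,
      HasDerivAt (fun s => s * f' s - H s) (t * deriv (deriv H) t) t := by
    intro t ht
    have htU := hIooU ht
    have hev : (fun s => s * f' s - H s) =ᶠ[nhds t]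
        fun s => s * deriv H s - H s := by
      refine Filter.eventuallyEq_of_mem (hUopen.mem_nhds htU) fun s hs => ?_
      simp only [fe s hs]
    have hd : HasDerivAt (fun s => s * deriv H s - H s)
        (1 * deriv H t + t * deriv (deriv H) t - deriv H t) t :=
      ((hasDerivAt_id t).mul (hH2 t htU)).sub (hH1 t htU)
    have h2 := hd.congr_of_eventuallyEq hev
    refine h2.congr_deriv ?_
    ring
  have hφmono : MonotoneOn (fun s => s * f' s - H s) (Icc Tb T1) := by
    refine monotoneOn_of_deriv_nonneg (convex_Icc _ _) ?_ ?_ ?_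
    · exact (continuousOn_id.mul hf'cont).sub hHcont
    · rw [interior_Icc]
      exact fun t ht => (hφderiv t ht).differentiableAt.differentiableWithinAt
    · rw [interior_Icc]
      intro t ht
      rw [(hφderiv t ht).deriv]
      have h0t : (0:ℝ) < t := lt_trans hTb ht.1
      exact mul_nonneg h0t.le (hh2 t ht)
  have hφ0 : ∀ t ∈ Icc Tb T1, 0 ≤ t * f' t - H t := by
    intro t ht
    have h1 := hφmono hTbmem ht ht.1
    dsimp only at h1
    linarith [hTH]
  -- Step 4: H(2Tb) ≥ 2 H(Tb)
  have h2Tbmem : 2 * Tb ∈ Icc Tb T1 := ⟨by linarith, h2TbT1.le⟩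
  have hH2Tb : 2 * H Tb ≤ H (2 * Tb) := by
    have hψderiv : ∀ t ∈ Ioo Tb T1,
        HasDerivAt (fun s => H s / s) ((deriv H t * t - H t * 1) / t ^ 2) t := by
      intro t ht
      exact (hH1 t (hIooU ht)).div (hasDerivAt_id t)
        (ne_of_gt (lt_trans hTb ht.1))
    have hψmono : MonotoneOn (fun s => H s / s) (Icc Tb T1) := by
      refine monotoneOn_of_deriv_nonneg (convex_Icc _ _) ?_ ?_ ?_
      · exact hHcont.div continuousOn_id fun x hx =>
          ne_of_gt (lt_of_lt_of_le hTb hx.1)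
      · rw [interior_Icc]
        exact fun t ht => (hψderiv t ht).differentiableAt.differentiableWithinAt
      · rw [interior_Icc]
        intro t ht
        rw [(hψderiv t ht).deriv]
        have h0t : (0:ℝ) < t := lt_trans hTb ht.1
        have h2 := hφ0 t (Ioo_subset_Icc_self ht)
        have hfe := fe t (hIooU ht)
        apply div_nonneg _ (by positivity)
        rw [← hfe]
        nlinarith
    have h3 := hψmono hTbmem h2Tbmem (by linarith)
    dsimp only at h3
    rw [div_le_div_iff₀ hTb (by linarith)] at h3
    nlinarith
  -- Step 5: energy estimate
  have hEderiv : ∀ t ∈ Ioo Tb T1,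
      HasDerivAt (fun s => (f' s) ^ 2 - c' * H s ^ q)
        (2 * deriv H t ^ 1 * deriv (deriv H) t -
          c' * (deriv H t * q * H t ^ (q - 1))) t := by
    intro t ht
    have htU := hIooU ht
    have hev : (fun s => (f' s) ^ 2 - c' * H s ^ q) =ᶠ[nhds t]
        fun s => (deriv H s) ^ 2 - c' * H s ^ q := by
      refine Filter.eventuallyEq_of_mem (hUopen.mem_nhds htU) fun s hs => ?_
      simp only [fe s hs]
    have hne : H t ≠ 0 := (hHpos t (Ioo_subset_Icc_self ht)).ne'
    exact (((hH2 t htU).pow 2).sub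
      (((hH1 t htU).rpow_const (Or.inl hne)).const_mul c')).congr_of_eventuallyEq hev
  have hEmono : MonotoneOn (fun s => (f' s) ^ 2 - c' * H s ^ q) (Icc Tb T1) := by
    refine monotoneOn_of_deriv_nonneg (convex_Icc _ _) ?_ ?_ ?_
    · exact (hf'cont.pow 2).sub (continuousOn_const.mul
        (hHcont.rpow_const fun x hx => Or.inl (hHpos x hx).ne'))
    · rw [interior_Icc]
      exact fun t ht => (hEderiv t ht).differentiableAt.differentiableWithinAt
    · rw [interior_Icc]
      intro t ht
      rw [(hEderiv t ht).deriv]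
      have h1pos := hderivpos t ht
      have hkey := hineq' t (hIooU ht)
      have hq1 : q - 1 = (p + 1) / 2 := by rw [hq]; ring
      rw [hq1, pow_one]
      have hcq : c' * q = 2 * K := by rw [hc', hq]; field_simp; ring
      have h3 : c' * (deriv H t * q * H t ^ ((p + 1) / 2))
          = 2 * K * (deriv H t * H t ^ ((p + 1) / 2)) := by
        calc c' * (deriv H t * q * H t ^ ((p + 1) / 2))
            = (c' * q) * (deriv H t * H t ^ ((p + 1) / 2)) := by ring
          _ = 2 * K * (deriv H t * H t ^ ((p + 1) / 2)) := by rw [hcq]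
      rw [h3]
      nlinarith [mul_le_mul_of_nonneg_left hkey h1pos.le]
  -- Step 6: pointwise lower bound on H' beyond 2Tb
  have hIccsub : Icc (2 * Tb) T1 ⊆ Icc Tb T1 := Icc_subset_Icc (by linarith) le_rfl
  have hfpos' : ∀ t ∈ Icc Tb T1, 0 < f' t := fun t ht =>
    hH' t ht.1 (hsub ht).2
  have hest : ∀ t ∈ Icc (2 * Tb) T1, C * H t ^ ((p + 3) / 4) ≤ f' t := by
    intro t ht
    have htmem : t ∈ Icc Tb T1 := hIccsub ht
    have hEt := hEmono hTbmem htmem htmem.1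
    dsimp only at hEt
    have hHt2 : 2 * H Tb ≤ H t := le_trans hH2Tb (hHmono h2Tbmem htmem ht.1)
    have hHtpos := hHpos t htmem
    have h1 : H Tb ^ q ≤ (H t / 2) ^ q :=
      Real.rpow_le_rpow hHT.le (by linarith) hq0
    have h2 : (H t / 2) ^ q = H t ^ q * (2:ℝ) ^ (-q) := by
      rw [Real.div_rpow hHtpos.le (by norm_num), Real.rpow_neg (by norm_num),
        div_eq_mul_inv]
    have hXq : H t ^ q = (H t ^ ((p + 3) / 4)) ^ 2 := by
      rw [← Real.rpow_natCast (H t ^ ((p + 3) / 4)) 2, ← Real.rpow_mul hHtpos.le]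
      norm_num
      rw [hq]
      congr 1
      ring
    have hgoal_eq : (C * H t ^ ((p + 3) / 4)) ^ 2
        = c' * H t ^ q - c' * (H t ^ q * (2:ℝ) ^ (-q)) := by
      rw [mul_pow, hC2, hcc', ← hXq]; ring
    have h1' : c' * (H Tb ^ q) ≤ c' * (H t ^ q * (2:ℝ) ^ (-q)) :=
      mul_le_mul_of_nonneg_left (h1.trans h2.le) hc'pos.le
    have hsq : (C * H t ^ ((p + 3) / 4)) ^ 2 ≤ f' t ^ 2 := by
      rw [hgoal_eq]
      nlinarith [sq_nonneg (f' Tb)]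
    have hXpos : 0 < H t ^ ((p + 3) / 4) := Real.rpow_pos_of_pos hHtpos _
    nlinarith [hfpos' t htmem, mul_pos hCpos hXpos]
  -- Step 7: the function H^e + ((p-1)/4) C t is antitone on [2Tb, T1]
  have hGderiv : ∀ t ∈ Ioo (2 * Tb) T1,
      HasDerivAt (fun s => H s ^ e + (p - 1) / 4 * C * s)
        (deriv H t * e * H t ^ (e - 1) + (p - 1) / 4 * C * 1) t := by
    intro t ht
    have htIoo : t ∈ Ioo Tb T1 := ⟨by linarith [ht.1], ht.2⟩
    have hne : H t ≠ 0 := (hHpos t (Ioo_subset_Icc_self htIoo)).ne'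
    exact ((hH1 t (hIooU htIoo)).rpow_const (Or.inl hne)).add
      (((hasDerivAt_id t).const_mul ((p - 1) / 4 * C)))
  have hGanti : AntitoneOn (fun s => H s ^ e + (p - 1) / 4 * C * s)
      (Icc (2 * Tb) T1) := by
    refine antitoneOn_of_deriv_nonpos (convex_Icc _ _) ?_ ?_ ?_
    · exact (((hHcont.mono hIccsub).rpow_const fun x hx =>
        Or.inl (hHpos x (hIccsub hx)).ne').add
        (continuousOn_const.mul continuousOn_id))
    · rw [interior_Icc]
      exact fun t ht => (hGderiv t ht).differentiableAt.differentiableWithinAt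
    · rw [interior_Icc]
      intro t ht
      rw [(hGderiv t ht).deriv]
      have htIoo : t ∈ Ioo Tb T1 := ⟨by linarith [ht.1], ht.2⟩
      have htmem : t ∈ Icc (2 * Tb) T1 := Ioo_subset_Icc_self ht
      have hHtpos := hHpos t (hIccsub htmem)
      have hXpos : 0 < H t ^ ((p + 3) / 4) := Real.rpow_pos_of_pos hHtpos _
      have hCX : C * H t ^ ((p + 3) / 4) ≤ deriv H t := by
        rw [← fe t (hIooU htIoo)]
        exact hest t htmem
      have he1 : e - 1 = -((p + 3) / 4) := by rw [he]; ring
      rw [he1, Real.rpow_neg hHtpos.le]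
      have hdiv : C ≤ deriv H t * (H t ^ ((p + 3) / 4))⁻¹ := by
        rw [← div_eq_mul_inv]
        exact (le_div_iff₀ hXpos).2 (by linarith)
      have hmul := mul_le_mul_of_nonneg_left hdiv
        (show (0:ℝ) ≤ (p - 1) / 4 by linarith)
      rw [he]
      nlinarith [hmul]
  -- conclude
  have hmem2Tb : 2 * Tb ∈ Icc (2 * Tb) T1 := ⟨le_rfl, h2TbT1.le⟩
  have hmemT1 : T1 ∈ Icc (2 * Tb) T1 := ⟨h2TbT1.le, le_rfl⟩
  have hGle := hGanti hmem2Tb hmemT1 h2TbT1.le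
  dsimp only at hGle
  have hHT1pos : 0 < H T1 ^ e :=
    Real.rpow_pos_of_pos (hHpos T1 ⟨hTbT1.le, le_rfl⟩) _
  have h2TbZ : H (2 * Tb) ^ e ≤ Z := by
    rw [hZ]
    exact Real.rpow_le_rpow_of_nonpos (by linarith) hH2Tb he0
  have haux : (p - 1) / 4 * C * (T1 - 2 * Tb) < Z := by nlinarith [hGle, h2TbZ, hHT1pos]
  have hT1B : T1 - 2 * Tb < 4 / (p - 1) * C⁻¹ * Z := by
    rw [show 4 / (p - 1) * C⁻¹ * Z = Z / ((p - 1) / 4 * C) by field_simp]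
    refine (lt_div_iff₀ (mul_pos (by linarith) hCpos)).2 ?_
    nlinarith [haux]
  rw [hBeq] at hBT1
  linarith
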